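/- Let p be a non-zero polynomial on ℂⁿ, A > 0, and let (f_m) be a sequence of entire functions such that (p·f_m) is a Cauchy sequence with respect to the norm ‖g‖_A = sup_z |g(z)|e^{-A|z|}. Then (f_m) is a Cauchy sequence with respect to the norm ‖·‖_{√n A}. -/

import Mathlib

/-- The Euclidean norm on ℂⁿ. -/
noncomputable def enorm' {n : ℕ} (z : Fin n → ℂ) : ℝ :=
  Real.sqrt (∑ i, ‖z i‖ ^ 2)

lemma enorm'_eq {n : ℕ} (z : Fin n → ℂ) :
    enorm' z = ‖(WithLp.equiv 2 (Fin n → ℂ)).symm z‖ := by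
  simp [enorm', EuclideanSpace.norm_eq]

lemma enorm'_nonneg {n : ℕ} (z : Fin n → ℂ) : 0 ≤ enorm' z := Real.sqrt_nonneg _

lemma enorm'_add_le {n : ℕ} (x y : Fin n → ℂ) : enorm' (x + y) ≤ enorm' x + enorm' y := by
  simp only [enorm'_eq]
  rw [show (WithLp.equiv 2 (Fin n → ℂ)).symm (x + y)
      = (WithLp.equiv 2 (Fin n → ℂ)).symm x + (WithLp.equiv 2 (Fin n → ℂ)).symm y from rfl]
  exact norm_add_le _ _

lemma enorm'_smul {n : ℕ} (t : ℂ) (w : Fin n → ℂ) :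
    enorm' (t • w) = ‖t‖ * enorm' w := by
  simp only [enorm'_eq]
  rw [show (WithLp.equiv 2 (Fin n → ℂ)).symm (t • w)
      = t • (WithLp.equiv 2 (Fin n → ℂ)).symm w from rfl]
  rw [norm_smul]

/-- Restriction of a multivariate polynomial to the line `t ↦ z + t • w`. -/
noncomputable def lineP {n : ℕ} (z w : Fin n → ℂ) (p : MvPolynomial (Fin n) ℂ) : Polynomial ℂ :=
  MvPolynomial.eval₂ Polynomial.C (fun i => Polynomial.C (z i) + Polynomial.C (w i) * Polynomial.X) p

lemma lineP_eval {n : ℕ} (z w : Fin n → ℂ) (p : MvPolynomial (Fin n) ℂ) (t : ℂ) :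
    (lineP z w p).eval t = MvPolynomial.eval (z + t • w) p := by
  induction p using MvPolynomial.induction_on with
  | C a => simp [lineP]
  | add p q hp hq => simp only [lineP, MvPolynomial.eval₂_add, MvPolynomial.eval_add,
      Polynomial.eval_add] at *; rw [hp, hq]
  | mul_X p i hp => simp only [lineP, MvPolynomial.eval₂_mul, MvPolynomial.eval₂_X,
      MvPolynomial.eval_mul, MvPolynomial.eval_X, Polynomial.eval_mul] at *
                    rw [hp]
                    have : (z + t • w) i = z i + t * w i := rfl
                    rw [this, Polynomial.eval_add, Polynomial.eval_mul, Polynomial.eval_C,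
                      Polynomial.eval_C, Polynomial.eval_X]; ring

lemma coeff_one_aux (a b : ℂ) : (Polynomial.C a + Polynomial.C b * Polynomial.X).coeff 1 = b := by
  simp

lemma natDegree_aux (a b : ℂ) : (Polynomial.C a + Polynomial.C b * Polynomial.X).natDegree ≤ 1 := by
  apply le_trans (Polynomial.natDegree_add_le _ _)
  simp [Polynomial.natDegree_C_mul_le]
  exact le_trans (Polynomial.natDegree_mul_le) (by simp)

lemma coeff_pow_aux (a b : ℂ) (e : ℕ) :
    ((Polynomial.C a + Polynomial.C b * Polynomial.X) ^ e).coeff e = b ^ e := by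
  induction e with
  | zero => simp
  | succ e ih =>
    rw [pow_succ, Polynomial.coeff_mul_add_eq_of_natDegree_le
      (le_trans (Polynomial.natDegree_pow_le)
        (by simpa using Nat.mul_le_mul_left e (natDegree_aux a b)))
      (natDegree_aux a b), ih, coeff_one_aux, pow_succ]

lemma coeff_prod_of_le {ι : Type*} (s : Finset ι) (f : ι → Polynomial ℂ) (d : ι → ℕ)
    (h : ∀ i ∈ s, (f i).natDegree ≤ d i) :
    (∏ i ∈ s, f i).coeff (∑ i ∈ s, d i) = ∏ i ∈ s, (f i).coeff (d i) := by
  induction s using Finset.cons_induction with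
  | empty => simp
  | cons a s ha ih =>
    rw [Finset.prod_cons, Finset.sum_cons, Polynomial.coeff_mul_add_eq_of_natDegree_le
      (h a (Finset.mem_cons_self a s))
      (le_trans (Polynomial.natDegree_prod_le _ _)
        (Finset.sum_le_sum fun i hi => h i (Finset.mem_cons_of_mem hi))),
      ih fun i hi => h i (Finset.mem_cons_of_mem hi), Finset.prod_cons]

lemma lineP_monomial {n : ℕ} (z w : Fin n → ℂ) (a : Fin n →₀ ℕ) (c : ℂ) :
    lineP z w (MvPolynomial.monomial a c)
      = Polynomial.C c * ∏ i ∈ a.support, (Polynomial.C (z i) + Polynomial.C (w i) * Polynomial.X) ^ (a i) := by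
  rw [lineP, MvPolynomial.eval₂_monomial]
  rfl

lemma natDegree_lineP_monomial_le {n : ℕ} (z w : Fin n → ℂ) (a : Fin n →₀ ℕ) (c : ℂ) :
    (lineP z w (MvPolynomial.monomial a c)).natDegree ≤ a.degree := by
  rw [lineP_monomial]
  refine le_trans (Polynomial.natDegree_mul_le) ?_
  simp only [Polynomial.natDegree_C, zero_add, Finsupp.degree]
  refine le_trans (Polynomial.natDegree_prod_le _ _) (Finset.sum_le_sum fun i _ => ?_)
  exact le_trans (Polynomial.natDegree_pow_le)
    (by simpa using Nat.mul_le_mul_left (a i) (natDegree_aux (z i) (w i)))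

lemma coeff_lineP_monomial {n : ℕ} (z w : Fin n → ℂ) (a : Fin n →₀ ℕ) (c : ℂ) :
    (lineP z w (MvPolynomial.monomial a c)).coeff a.degree
      = c * ∏ i ∈ a.support, (w i) ^ (a i) := by
  rw [lineP_monomial, Finsupp.degree_apply, show (∑ i ∈ a.support, a i) = 0 + ∑ i ∈ a.support, a i by ring,
    Polynomial.coeff_mul_add_eq_of_natDegree_le (by simp)
      (le_trans (Polynomial.natDegree_prod_le _ _) (Finset.sum_le_sum fun i _ =>
        le_trans (Polynomial.natDegree_pow_le)
          (by simpa using Nat.mul_le_mul_left (a i) (natDegree_aux (z i) (w i))))),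
    coeff_prod_of_le _ _ _ (fun i _ => le_trans (Polynomial.natDegree_pow_le)
      (by simpa using Nat.mul_le_mul_left (a i) (natDegree_aux (z i) (w i)))),
    Polynomial.coeff_C_zero]
  congr 1
  exact Finset.prod_congr rfl fun i _ => coeff_pow_aux (z i) (w i) (a i)

lemma lineP_sum {n : ℕ} (z w : Fin n → ℂ) (p : MvPolynomial (Fin n) ℂ) :
    lineP z w p = ∑ a ∈ p.support, lineP z w (MvPolynomial.monomial a (MvPolynomial.coeff a p)) := by
  conv_lhs => rw [lineP, MvPolynomial.as_sum p, MvPolynomial.eval₂_sum]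
  rfl

lemma degree_le_totalDegree {n : ℕ} {p : MvPolynomial (Fin n) ℂ} {a : Fin n →₀ ℕ}
    (h : a ∈ p.support) : a.degree ≤ p.totalDegree := by
  simpa [Finsupp.degree_apply, Finsupp.sum] using MvPolynomial.le_totalDegree h

lemma lineP_natDegree_le {n : ℕ} (z w : Fin n → ℂ) (p : MvPolynomial (Fin n) ℂ) :
    (lineP z w p).natDegree ≤ p.totalDegree := by
  rw [lineP_sum]
  exact Polynomial.natDegree_sum_le_of_forall_le _ _ fun a ha =>
    le_trans (natDegree_lineP_monomial_le z w a _) (degree_le_totalDegree ha)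

lemma coeff_lineP_totalDegree {n : ℕ} (z w : Fin n → ℂ) (p : MvPolynomial (Fin n) ℂ) :
    (lineP z w p).coeff p.totalDegree
      = MvPolynomial.eval w (MvPolynomial.homogeneousComponent p.totalDegree p) := by
  rw [lineP_sum, Polynomial.finset_sum_coeff, MvPolynomial.homogeneousComponent_apply, map_sum,
    Finset.sum_filter]
  refine Finset.sum_congr rfl fun a ha => ?_
  by_cases hd : a.degree = p.totalDegree
  · rw [if_pos hd, ← hd, coeff_lineP_monomial, MvPolynomial.eval_monomial]
    rfl
  · rw [if_neg hd, Polynomial.coeff_eq_zero_of_natDegree_lt]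
    exact lt_of_le_of_lt (natDegree_lineP_monomial_le z w a _)
      (lt_of_le_of_ne (degree_le_totalDegree ha) hd)

lemma exists_good_direction {n : ℕ} (p : MvPolynomial (Fin n) ℂ) (hp : p ≠ 0) :
    ∃ w : Fin n → ℂ, MvPolynomial.eval w (MvPolynomial.homogeneousComponent p.totalDegree p) ≠ 0 := by
  by_contra h
  push_neg at h
  have h0 : MvPolynomial.homogeneousComponent p.totalDegree p = 0 :=
    MvPolynomial.funext fun x => by simpa using h x
  obtain ⟨a, ha, hda⟩ : ∃ a ∈ p.support, a.degree = p.totalDegree := by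
    obtain ⟨a, ha, h2⟩ := Finset.exists_mem_eq_sup p.support
      (MvPolynomial.support_nonempty.mpr hp) (fun s => s.sum fun _ e => e)
    exact ⟨a, ha, by simpa [Finsupp.degree_apply, Finsupp.sum, MvPolynomial.totalDegree] using h2.symm⟩
  have := MvPolynomial.coeff_homogeneousComponent (n := p.totalDegree) (φ := p) a
  rw [h0, if_pos hda] at this
  exact (MvPolynomial.mem_support_iff.mp ha) (by simpa using this.symm)

lemma exists_radius (S : Multiset ℝ) (d : ℕ) (hcard : Multiset.card S = d) :
    ∃ r : ℝ, 1 ≤ r ∧ r ≤ 2 ∧ ∀ x ∈ S, ((2 * (d + 1) : ℝ))⁻¹ ≤ |r - x| := by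
  set δ : ℝ := ((2 * (d + 1) : ℝ))⁻¹ with hδ
  have hδpos : 0 < δ := by positivity
  have hδle : (d + 1 : ℝ) * (2 * δ) = 1 := by
    field_simp [hδ]
    rw [hδ]; field_simp
  by_contra h
  push_neg at h
  have hr : ∀ k : Fin (d + 1), ∃ x ∈ S, |(1 + (2 * (k : ℕ) + 1) * δ) - x| < δ := by
    intro k
    have hk' : ((k : ℕ) : ℝ) ≤ d := by exact_mod_cast Nat.lt_succ_iff.mp k.is_lt
    have hk0 : (0:ℝ) ≤ ((k : ℕ) : ℝ) := Nat.cast_nonneg _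
    refine h _ (by nlinarith) (by nlinarith)
  choose x hxS hxlt using hr
  have hinj : Function.Injective x := by
    intro k j hkj
    by_contra hne
    have h1 := hxlt k
    have h2 := hxlt j
    rw [hkj] at h1
    have hne' : ((k : ℕ) : ℤ) ≠ ((j : ℕ) : ℤ) := by
      exact_mod_cast fun hc : (k:ℕ) = (j:ℕ) => hne (Fin.ext hc)
    have hone : (1:ℝ) ≤ |((k : ℕ) : ℝ) - ((j : ℕ) : ℝ)| := by
      have hcast : ((k : ℕ) : ℝ) - ((j : ℕ) : ℝ) = ((((k:ℕ) : ℤ) - ((j:ℕ) : ℤ) : ℤ) : ℝ) := by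
        push_cast; ring
      rw [hcast, ← Int.cast_abs]
      exact_mod_cast Int.one_le_abs (sub_ne_zero.mpr hne')
    have hsep : 2 * δ ≤ |(1 + (2 * (k : ℕ) + 1) * δ) - (1 + (2 * (j : ℕ) + 1) * δ)| := by
      have heq : (1 + (2 * (k : ℕ) + 1) * δ) - (1 + (2 * (j : ℕ) + 1) * δ)
          = (((k : ℕ) : ℝ) - ((j : ℕ) : ℝ)) * (2 * δ) := by ring
      rw [heq, abs_mul, abs_of_pos (by positivity : (0:ℝ) < 2 * δ)]
      nlinarith
    have htri : |(1 + (2 * (k : ℕ) + 1) * δ) - (1 + (2 * (j : ℕ) + 1) * δ)|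
        ≤ |(1 + (2 * (k : ℕ) + 1) * δ) - x j| + |(1 + (2 * (j : ℕ) + 1) * δ) - x j| := by
      have h4 : (1 + (2 * (k : ℕ) + 1) * δ) - (1 + (2 * (j : ℕ) + 1) * δ)
          = ((1 + (2 * (k : ℕ) + 1) * δ) - x j) - ((1 + (2 * (j : ℕ) + 1) * δ) - x j) := by ring
      rw [h4]
      exact abs_sub _ _
    linarith
  have hcard2 : d + 1 ≤ S.toFinset.card := by
    have : (Finset.univ : Finset (Fin (d+1))).card ≤ S.toFinset.card :=
      Finset.card_le_card_of_injOn x (fun k _ => Multiset.mem_toFinset.mpr (hxS k)) hinj.injOn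
    simpa using this
  have := Multiset.toFinset_card_le S
  omega

lemma pow_card_le_prod_multiset (s : Multiset ℝ) (δ : ℝ) (hδ : 0 ≤ δ) (h : ∀ x ∈ s, δ ≤ x) :
    δ ^ Multiset.card s ≤ s.prod := by
  induction s using Multiset.induction with
  | empty => simp
  | cons a s ih =>
    rw [Multiset.prod_cons, Multiset.card_cons, pow_succ, mul_comm]
    exact mul_le_mul (h a (Multiset.mem_cons_self a s))
      (ih fun x hx => h x (Multiset.mem_cons_of_mem hx)) (pow_nonneg hδ _)
      (le_trans hδ (h a (Multiset.mem_cons_self a s)))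

lemma circle_lower_bound (q : Polynomial ℂ) :
    ∃ r : ℝ, 1 ≤ r ∧ r ≤ 2 ∧ ∀ t : ℂ, ‖t‖ = r →
      ‖q.leadingCoeff‖ * ((2 * (q.natDegree + 1) : ℝ))⁻¹ ^ q.natDegree
        ≤ ‖q.eval t‖ := by
  set d := q.natDegree with hd
  have hsplit : Multiset.card q.roots = d :=
    Polynomial.splits_iff_card_roots.mp (IsAlgClosed.splits q)
  obtain ⟨r, hr1, hr2, hr⟩ := exists_radius (q.roots.map (‖·‖)) d (by simpa using hsplit)
  refine ⟨r, hr1, hr2, fun t ht => ?_⟩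
  have hfact := Polynomial.C_leadingCoeff_mul_prod_multiset_X_sub_C (p := q) hsplit
  have heval : ‖q.eval t‖
      = ‖q.leadingCoeff‖ * ((q.roots.map fun a => ‖t - a‖).prod) := by
    conv_lhs => rw [← hfact]
    rw [Polynomial.eval_mul, Polynomial.eval_C, norm_mul]
    congr 1
    rw [Polynomial.eval_multiset_prod, show ∀ s : Multiset ℂ, ‖s.prod‖ = (s.map (‖·‖)).prod from
      map_multiset_prod (normHom (α := ℂ)), Multiset.map_map, Multiset.map_map]
    congr 1
    refine Multiset.map_congr rfl fun a _ => ?_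
    simp
  rw [heval]
  refine mul_le_mul_of_nonneg_left ?_ (norm_nonneg _)
  have hcard' : Multiset.card (q.roots.map fun a => ‖t - a‖) = d := by simpa using hsplit
  calc ((2 * ((d:ℝ) + 1)))⁻¹ ^ d
      = ((2 * ((d:ℝ) + 1)))⁻¹ ^ Multiset.card (q.roots.map fun a => ‖t - a‖) := by
        rw [hcard']
    _ ≤ _ := by
        refine pow_card_le_prod_multiset _ _ (by positivity) ?_
        intro y hy
        obtain ⟨a, ha, rfl⟩ := Multiset.mem_map.mp hy
        have h1 : ((2 * ((d:ℝ) + 1)))⁻¹ ≤ |r - ‖a‖| :=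
          hr _ (Multiset.mem_map_of_mem _ ha)
        have h2 : |‖t‖ - ‖a‖| ≤ ‖t - a‖ :=
          abs_norm_sub_norm_le t a
        rw [ht] at h2
        linarith

lemma div_bound {n : ℕ} (p : MvPolynomial (Fin n) ℂ) (hp : p ≠ 0) (A : ℝ) (hA : 0 ≤ A) :
    ∃ C : ℝ, 0 < C ∧ ∀ g : (Fin n → ℂ) → ℂ, Differentiable ℂ g → ∀ M : ℝ, 0 ≤ M →
      (∀ z, ‖MvPolynomial.eval z p * g z‖ ≤ M * Real.exp (A * enorm' z)) →
      ∀ z, ‖g z‖ ≤ C * M * Real.exp (A * enorm' z) := by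
  obtain ⟨w, hw⟩ := exists_good_direction p hp
  set d := p.totalDegree with hd
  set c := MvPolynomial.eval w (MvPolynomial.homogeneousComponent d p) with hc
  set δ : ℝ := ((2 * (d + 1) : ℝ))⁻¹ with hδ
  set K : ℝ := ‖c‖ * δ ^ d with hK
  have hKpos : 0 < K := by
    have : 0 < ‖c‖ := by simpa using hw
    positivity
  refine ⟨Real.exp (2 * A * enorm' w) / K, by positivity, fun g hg M hM hbound z => ?_⟩
  set q := lineP z w p with hq
  have hcoeff : q.coeff d = c := coeff_lineP_totalDegree z w p
  have hqne : q.coeff d ≠ 0 := by rw [hcoeff]; exact hw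
  have hdeg : q.natDegree = d :=
    le_antisymm (lineP_natDegree_le z w p) (Polynomial.le_natDegree_of_ne_zero hqne)
  have hlead : q.leadingCoeff = c := by
    rw [Polynomial.leadingCoeff, hdeg, hcoeff]
  obtain ⟨r, hr1, hr2, hr⟩ := circle_lower_bound q
  have hrK : ∀ t : ℂ, ‖t‖ = r → K ≤ ‖q.eval t‖ := by
    intro t ht
    have := hr t ht
    rwa [hlead, hdeg] at this
  have hrpos : (0:ℝ) < r := lt_of_lt_of_le one_pos hr1
  set u : ℂ → ℂ := fun t => g (z + t • w) with hu
  have hud : Differentiable ℂ u :=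
    hg.comp ((differentiable_const z).add (differentiable_id.smul_const w))
  set B : ℝ := M * Real.exp (A * enorm' z) * Real.exp (2 * A * enorm' w) / K with hB
  have hmax : ‖u 0‖ ≤ B := by
    refine Complex.norm_le_of_forall_mem_frontier_norm_le Metric.isBounded_ball
      hud.diffContOnCl (fun t ht => ?_)
      (subset_closure (Metric.mem_ball_self hrpos))
    rw [frontier_ball (0:ℂ) hrpos.ne'] at ht
    have htr : ‖t‖ = r := by
      simpa using mem_sphere_zero_iff_norm.mp ht
    have h1 : K ≤ ‖q.eval t‖ := hrK t htr
    have h2 : ‖q.eval t‖ * ‖u t‖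
        ≤ M * Real.exp (A * (enorm' z + 2 * enorm' w)) := by
      rw [← norm_mul, lineP_eval]
      refine le_trans (hbound (z + t • w)) ?_
      refine mul_le_mul_of_nonneg_left (Real.exp_le_exp.mpr ?_) hM
      refine mul_le_mul_of_nonneg_left ?_ hA
      refine le_trans (enorm'_add_le z (t • w)) ?_
      rw [enorm'_smul, htr]
      have := enorm'_nonneg w
      nlinarith
    have h3 : K * ‖u t‖ ≤ M * Real.exp (A * (enorm' z + 2 * enorm' w)) :=
      le_trans (mul_le_mul_of_nonneg_right h1 (norm_nonneg _)) h2
    rw [hB, le_div_iff₀ hKpos]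
    calc ‖u t‖ * K ≤ M * Real.exp (A * (enorm' z + 2 * enorm' w)) := by
          rw [mul_comm]; exact h3
      _ = M * Real.exp (A * enorm' z) * Real.exp (2 * A * enorm' w) := by
          rw [mul_assoc, ← Real.exp_add]; ring_nf
  have hu0 : u 0 = g z := by simp [hu]
  rw [← hu0]
  refine le_trans hmax (le_of_eq ?_)
  rw [hB]
  ring

theorem stmt_6 {n : ℕ} (p : MvPolynomial (Fin n) ℂ) (hp : p ≠ 0) (A : ℝ) (hA : 0 < A)
    (f : ℕ → (Fin n → ℂ) → ℂ) (hf : ∀ m, Differentiable ℂ (f m))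
    (hc : ∀ ε > (0:ℝ), ∃ N, ∀ m ≥ N, ∀ k ≥ N, ∀ z,
      ‖MvPolynomial.eval z p * f m z - MvPolynomial.eval z p * f k z‖ ≤
        ε * Real.exp (A * enorm' z)) :
    ∀ ε > (0:ℝ), ∃ N, ∀ m ≥ N, ∀ k ≥ N, ∀ z,
      ‖f m z - f k z‖ ≤ ε * Real.exp (Real.sqrt n * A * enorm' z) := by
  obtain ⟨C, hC, hdiv⟩ := div_bound p hp A hA.le
  intro ε hε
  obtain ⟨N, hN⟩ := hc (ε / C) (by positivity)
  refine ⟨N, fun m hm k hk z => ?_⟩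
  have hbound : ∀ z, ‖MvPolynomial.eval z p * (f m z - f k z)‖
      ≤ (ε / C) * Real.exp (A * enorm' z) := by
    intro z
    rw [mul_sub]
    exact hN m hm k hk z
  have hkey := hdiv (fun z => f m z - f k z) ((hf m).sub (hf k)) (ε / C)
    (by positivity) hbound z
  have hCε : C * (ε / C) = ε := by field_simp
  rw [hCε] at hkey
  refine le_trans hkey (mul_le_mul_of_nonneg_left (Real.exp_le_exp.mpr ?_) hε.le)
  rcases Nat.eq_zero_or_pos n with hn | hn
  · subst hn
    have : enorm' z = 0 := by simp [enorm']
    simp [this]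
  · have h1 : (1:ℝ) ≤ Real.sqrt n := by
      rw [show (1:ℝ) = Real.sqrt 1 by simp]
      exact Real.sqrt_le_sqrt (by exact_mod_cast hn)
    calc A * enorm' z = 1 * (A * enorm' z) := by ring
      _ ≤ Real.sqrt n * (A * enorm' z) := by
          refine mul_le_mul_of_nonneg_right h1 (mul_nonneg hA.le (enorm'_nonneg z))
      _ = Real.sqrt n * A * enorm' z := by ring
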